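/- If two finite argumentation frameworks F and G have different naive kernels but the same set of arguments, then their naive extensions differ, i.e., na(F) ≠ na(G). -/

import Mathlib

structure AF where
  args : Finset ℕ
  att : Finset (ℕ × ℕ)
  att_sub : att ⊆ args ×ˢ args

namespace AF

/-- S is conflict-free in F. -/
def cf (F : AF) (S : Set ℕ) : Prop :=
  S ⊆ ↑F.args ∧ ∀ a ∈ S, ∀ b ∈ S, (a, b) ∉ F.att

/-- the range S⁺ of S in F -/
def rng (F : AF) (S : Set ℕ) : Set ℕ :=
  S ∪ {a | ∃ s ∈ S, (s, a) ∈ F.att}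

/-- the anti-range S⁻ of S in F -/
def arng (F : AF) (S : Set ℕ) : Set ℕ :=
  S ∪ {a | ∃ s ∈ S, (a, s) ∈ F.att}

/-- a is defended by S in F -/
def defends (F : AF) (S : Set ℕ) (a : ℕ) : Prop :=
  ∀ b, (b, a) ∈ F.att → ∃ s ∈ S, (s, b) ∈ F.att

def setDefends (F : AF) (S T : Set ℕ) : Prop := ∀ a ∈ T, F.defends S a

def admissible (F : AF) (S : Set ℕ) : Prop := F.cf S ∧ ∀ a ∈ S, F.defends S a

def complete (F : AF) (S : Set ℕ) : Prop :=
  F.admissible S ∧ ∀ a ∈ (F.args : Set ℕ), F.defends S a → a ∈ S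

def grounded (F : AF) (S : Set ℕ) : Prop :=
  F.complete S ∧ ∀ T, F.complete T → S ⊆ T

def naive (F : AF) (S : Set ℕ) : Prop :=
  F.cf S ∧ ∀ T, F.cf T → S ⊆ T → S = T

def stable (F : AF) (S : Set ℕ) : Prop := F.cf S ∧ F.rng S = ↑F.args

def stage (F : AF) (S : Set ℕ) : Prop :=
  F.cf S ∧ ∀ T, F.cf T → F.rng S ⊆ F.rng T → F.rng S = F.rng T

/-- strongly admissible sets (recursive definition) -/
inductive sad (F : AF) : Set ℕ → Prop where
  | intro (S : Set ℕ) (hsub : S ⊆ ↑F.args) (w : ℕ → Set ℕ)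
      (hw1 : ∀ a ∈ S, w a ⊆ S \ {a})
      (hw2 : ∀ a ∈ S, sad F (w a))
      (hw3 : ∀ a ∈ S, F.defends (w a) a) : sad F S

/-- self-attacking arguments -/
def loops (F : AF) : Set ℕ := {a | (a, a) ∈ F.att}

/-- naive kernel -/
def naiveKernel (F : AF) : AF :=
  ⟨F.args,
   F.att ∪ (F.args ×ˢ F.args).filter
     (fun p => p.1 ≠ p.2 ∧ ((p.1, p.1) ∈ F.att ∨ (p.2, p.1) ∈ F.att ∨ (p.2, p.2) ∈ F.att)),
   Finset.union_subset F.att_sub (Finset.filter_subset _ _)⟩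

/-- stable kernel -/
def stbKernel (F : AF) : AF :=
  ⟨F.args, F.att.filter (fun p => ¬ (p.1 ≠ p.2 ∧ (p.1, p.1) ∈ F.att)),
   (Finset.filter_subset _ _).trans F.att_sub⟩

/-- grounded kernel -/
def grKernel (F : AF) : AF :=
  ⟨F.args,
   F.att.filter (fun p => ¬ (p.1 ≠ p.2 ∧ (p.2, p.2) ∈ F.att ∧ ((p.1, p.1) ∈ F.att ∨ (p.2, p.1) ∈ F.att))),
   (Finset.filter_subset _ _).trans F.att_sub⟩

/-- F^l : remove attacks between distinct self-attacking arguments -/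
def loopKernel (F : AF) : AF :=
  ⟨F.args,
   F.att.filter (fun p => ¬ (p.1 ≠ p.2 ∧ (p.1, p.1) ∈ F.att ∧ (p.2, p.2) ∈ F.att)),
   (Finset.filter_subset _ _).trans F.att_sub⟩

/-- union of AFs -/
def union (F G : AF) : AF :=
  ⟨F.args ∪ G.args, F.att ∪ G.att,
   Finset.union_subset
     (F.att_sub.trans (Finset.product_subset_product Finset.subset_union_left Finset.subset_union_left))
     (G.att_sub.trans (Finset.product_subset_product Finset.subset_union_right Finset.subset_union_right))⟩

end AF


lemma AF.ext' {F G : AF} (h1 : F.args = G.args) (h2 : F.att = G.att) : F = G := by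
  cases F; cases G; simp_all

lemma cf_ext (F : AF) (S : Set ℕ) (h : F.cf S) : ∃ T, F.naive T ∧ S ⊆ T := by
  have hfin : {T | F.cf T ∧ S ⊆ T}.Finite := by
    apply Set.Finite.subset ((F.args : Set ℕ).toFinite.finite_subsets)
    intro T hT; exact hT.1.1
  obtain ⟨T, hT, hmax'⟩ := Set.Finite.exists_maximalFor id _ hfin ⟨S, h, subset_rfl⟩
  have hmax : ∀ T' ∈ {T | F.cf T ∧ S ⊆ T}, T ⊆ T' → T = T' :=
    fun T' hT' hsub => le_antisymm hsub (hmax' hT' hsub)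
  exact ⟨T, ⟨hT.1, fun T' hcf hsub => hmax T' ⟨hcf, hT.2.trans hsub⟩ hsub⟩, hT.2⟩

lemma ker_diag (F : AF) (a : ℕ) :
    (a, a) ∈ F.naiveKernel.att ↔ a ∈ F.args ∧ ¬∃ S, F.naive S ∧ a ∈ S := by
  have hmem : (a, a) ∈ F.naiveKernel.att ↔ (a, a) ∈ F.att := by
    simp [AF.naiveKernel]
  rw [hmem]
  constructor
  · intro hatt
    refine ⟨(Finset.mem_product.mp (F.att_sub hatt)).1, ?_⟩
    rintro ⟨S, hS, haS⟩
    exact hS.1.2 a haS a haS hatt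
  · rintro ⟨hargs, hno⟩
    by_contra hatt
    have hcf : F.cf {a} := by
      refine ⟨by simpa using hargs, ?_⟩
      rintro x rfl y rfl
      exact hatt
    obtain ⟨T, hT, hsub⟩ := cf_ext F {a} hcf
    exact hno ⟨T, hT, hsub rfl⟩

lemma ker_off (F : AF) (a b : ℕ) (hab : a ≠ b) :
    (a, b) ∈ F.naiveKernel.att ↔
      a ∈ F.args ∧ b ∈ F.args ∧ ¬∃ S, F.naive S ∧ a ∈ S ∧ b ∈ S := by
  constructor
  · intro hk
    have hargs := Finset.mem_product.mp (F.naiveKernel.att_sub hk)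
    refine ⟨hargs.1, hargs.2, ?_⟩
    rintro ⟨S, hS, haS, hbS⟩
    rcases Finset.mem_union.mp hk with hatt | hfil
    · exact hS.1.2 a haS b hbS hatt
    · rcases (Finset.mem_filter.mp hfil).2.2 with h1 | h2 | h3
      · exact hS.1.2 a haS a haS h1
      · exact hS.1.2 b hbS a haS h2
      · exact hS.1.2 b hbS b hbS h3
  · rintro ⟨hargs_a, hargs_b, hno⟩
    by_contra hk
    have hnatt : (a, b) ∉ F.att := fun hatt =>
      hk (Finset.mem_union_left _ hatt)
    have hcond : ¬((a, a) ∈ F.att ∨ (b, a) ∈ F.att ∨ (b, b) ∈ F.att) := by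
      intro hor
      exact hk (Finset.mem_union_right _ (Finset.mem_filter.mpr
        ⟨Finset.mem_product.mpr ⟨hargs_a, hargs_b⟩, hab, hor⟩))
    push_neg at hcond
    obtain ⟨h1, h2, h3⟩ := hcond
    have hcf : F.cf {a, b} := by
      constructor
      · intro x hx
        rcases hx with rfl | rfl
        · exact hargs_a
        · exact hargs_b
      · rintro x (rfl | rfl) y (rfl | rfl)
        · exact h1
        · exact hnatt
        · exact h2
        · exact h3
    obtain ⟨T, hT, hsub⟩ := cf_ext F {a, b} hcf
    exact hno ⟨T, hT, hsub (Or.inl rfl), hsub (Or.inr rfl)⟩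

theorem stmt3 (F G : AF) (h : F.naiveKernel ≠ G.naiveKernel) (ha : F.args = G.args) :
    {S | F.naive S} ≠ {S | G.naive S} := by
  intro hna
  apply h
  have hiff : ∀ S, F.naive S ↔ G.naive S := fun S => Set.ext_iff.mp hna S
  apply AF.ext'
  · exact ha
  · ext ⟨a, b⟩
    by_cases hab : a = b
    · subst hab
      rw [ker_diag, ker_diag, ha]
      simp only [hiff]
    · rw [ker_off F a b hab, ker_off G a b hab, ha]
      simp only [hiff]
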